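/- Let L₁ be a symmetric positive definite matrix, P > 0 satisfy AP + PA^T + αP − 2BB^T < 0, and c₁ ≥ 1/λ_min(L₁). Then Z + αL₁ ⊗ P^{-1} < 0, where Z = L₁ ⊗ (P^{-1}A + A^T P^{-1}) − 2c₁ L₁² ⊗ P^{-1}BB^T P^{-1}. -/

import Mathlib

open Matrix
open scoped Kronecker

section Helpers

variable {m l : Type*} [Fintype m] [DecidableEq m] [Fintype l] [DecidableEq l]

lemma posDef_conjTranspose_mul_self_of_isUnit {E : Matrix m m ℝ} (hE : IsUnit E) :
    (Eᴴ * E).PosDef := by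
  refine PosDef.of_dotProduct_mulVec_pos (isHermitian_conjTranspose_mul_self _) fun x hx => ?_
  rw [← mulVec_mulVec, dotProduct_mulVec, vecMul_conjTranspose, star_star]
  refine dotProduct_star_self_pos_iff.mpr fun h => hx ?_
  exact (mulVec_injective_iff_isUnit.mpr hE) (h.trans (mulVec_zero E).symm)

lemma conjTranspose_kron (A : Matrix m m ℝ) (B : Matrix l l ℝ) :
    (A ⊗ₖ B)ᴴ = Aᴴ ⊗ₖ Bᴴ := by
  ext ⟨i, j⟩ ⟨k, l'⟩
  simp [conjTranspose_apply, kroneckerMap_apply]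

lemma posSemidef_kron {A : Matrix m m ℝ} {B : Matrix l l ℝ}
    (hA : A.PosSemidef) (hB : B.PosSemidef) : (A ⊗ₖ B).PosSemidef := by
  exact hA.kronecker hB

lemma posDef_kron {A : Matrix m m ℝ} {B : Matrix l l ℝ}
    (hA : A.PosDef) (hB : B.PosDef) : (A ⊗ₖ B).PosDef := by
  exact hA.kronecker hB

lemma posDef_mul_mul_conjTranspose {M : Matrix m m ℝ} (hM : M.PosDef)
    {C : Matrix m m ℝ} (hC : IsUnit C) : (C * M * Cᴴ).PosDef := by
  have hCH : IsUnit Cᴴ := by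
    rw [isUnit_iff_isUnit_det, det_conjTranspose, star_trivial]
    exact (isUnit_iff_isUnit_det C).mp hC
  refine PosDef.of_dotProduct_mulVec_pos ?_ fun x hx => ?_
  · simp only [IsHermitian, conjTranspose_mul, conjTranspose_conjTranspose, hM.1.eq,
      Matrix.mul_assoc]
  · rw [← mulVec_mulVec, ← mulVec_mulVec, dotProduct_mulVec,
      ← conjTranspose_conjTranspose C, vecMul_conjTranspose, star_star,
      conjTranspose_conjTranspose]
    refine hM.dotProduct_mulVec_pos fun h => hx ?_
    exact (mulVec_injective_iff_isUnit.mpr hCH) (h.trans (mulVec_zero Cᴴ).symm)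

lemma posSemidef_spectral_comb {L : Matrix m m ℝ} (hL : L.IsHermitian) (c : ℝ)
    (h : ∀ i, 0 ≤ 2 * c * hL.eigenvalues i ^ 2 - 2 * hL.eigenvalues i) :
    ((2 * c) • (L * L) - (2 : ℝ) • L).PosSemidef := by
  have hUU : (star (hL.eigenvectorUnitary : Matrix m m ℝ)) * hL.eigenvectorUnitary = 1 :=
    Unitary.coe_star_mul_self _
  set U : Matrix m m ℝ := (hL.eigenvectorUnitary : Matrix m m ℝ) with hU
  set f : m → ℝ := hL.eigenvalues with hf
  have hD : (diagonal (RCLike.ofReal ∘ f) : Matrix m m ℝ) = diagonal f := by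
    rw [RCLike.ofReal_real_eq_id]; rfl
  have hspec : L = U * diagonal f * star U := by
    rw [← hD]; exact hL.spectral_theorem
  have key : (2 * c) • (L * L) - (2 : ℝ) • L =
      U * diagonal (fun i => 2 * c * f i ^ 2 - 2 * f i) * star U := by
    rw [hspec]
    have h2 : (U * diagonal f * star U) * (U * diagonal f * star U)
        = U * (diagonal f * diagonal f) * star U := by
      simp only [Matrix.mul_assoc]
      rw [← Matrix.mul_assoc (star U) U, hUU, Matrix.one_mul]
    have h3 : (2 * c) • (diagonal f * diagonal f) - (2 : ℝ) • (diagonal f : Matrix m m ℝ)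
        = diagonal (fun i => 2 * c * f i ^ 2 - 2 * f i) := by
      rw [diagonal_mul_diagonal]
      ext i j
      rcases eq_or_ne i j with hij | hij
      · subst hij
        simp only [Matrix.sub_apply, Matrix.smul_apply, diagonal_apply_eq, smul_eq_mul]
        ring
      · simp [Matrix.sub_apply, Matrix.smul_apply, diagonal_apply_ne _ hij]
    calc (2 * c) • ((U * diagonal f * star U) * (U * diagonal f * star U))
          - (2 : ℝ) • (U * diagonal f * star U)
        = U * ((2 * c) • (diagonal f * diagonal f)) * star U
          - U * ((2 : ℝ) • diagonal f) * star U := by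
          rw [h2]
          simp only [Matrix.mul_smul, Matrix.smul_mul]
      _ = U * ((2 * c) • (diagonal f * diagonal f) - (2 : ℝ) • diagonal f) * star U := by
          rw [← Matrix.sub_mul, ← Matrix.mul_sub]
      _ = U * diagonal (fun i => 2 * c * f i ^ 2 - 2 * f i) * star U := by rw [h3]
  rw [key, Matrix.star_eq_conjTranspose]
  exact (Matrix.PosSemidef.diagonal (fun i => h i)).mul_mul_conjTranspose_same U

end Helpers

/-- If `L₁ > 0` with smallest eigenvalue `λ_min(L₁)`, `P > 0` satisfies
`AP + PAᵀ + αP − 2BBᵀ < 0`, and `c₁ ≥ 1/λ_min(L₁)`, then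
`Z + αL₁ ⊗ P⁻¹ < 0`, where `Z = L₁ ⊗ (P⁻¹A + AᵀP⁻¹) − 2c₁L₁² ⊗ P⁻¹BBᵀP⁻¹`. -/
theorem kron_Z_negDef (N n p : ℕ) (hN : 0 < N)
    (L1 : Matrix (Fin N) (Fin N) ℝ) (hL1 : L1.PosDef)
    (A : Matrix (Fin n) (Fin n) ℝ) (B : Matrix (Fin n) (Fin p) ℝ)
    (P : Matrix (Fin n) (Fin n) ℝ) (hP : P.PosDef)
    (α c1 : ℝ) (hα : 0 < α)
    (hc1 : c1 ≥ 1 / ⨅ i, hL1.1.eigenvalues i)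
    (hLMI : (-(A * P + P * Aᵀ + α • P - (2 : ℝ) • (B * Bᵀ))).PosDef)
    (Z : Matrix (Fin N × Fin n) (Fin N × Fin n) ℝ)
    (hZ : Z = Matrix.kroneckerMap (· * ·) L1 (P⁻¹ * A + Aᵀ * P⁻¹) -
        (2 * c1) • Matrix.kroneckerMap (· * ·) (L1 * L1) (P⁻¹ * B * Bᵀ * P⁻¹)) :
    (-(Z + α • Matrix.kroneckerMap (· * ·) L1 P⁻¹)).PosDef := by
  haveI : Nonempty (Fin N) := ⟨⟨0, hN⟩⟩
  have hPdet : IsUnit P.det := (isUnit_iff_isUnit_det P).mp hP.isUnit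
  have hPP : P * P⁻¹ = 1 := mul_nonsing_inv P hPdet
  have hPiP : P⁻¹ * P = 1 := nonsing_inv_mul P hPdet
  have hPinvH : P⁻¹ᴴ = P⁻¹ := hP.inv.1
  have hPinvUnit : IsUnit (P⁻¹ : Matrix (Fin n) (Fin n) ℝ) := hP.inv.isUnit
  have hBH : Bᴴ = Bᵀ := by ext i j; simp [conjTranspose_apply]
  -- Q is positive definite
  have hQpos : (P⁻¹ * (-(A * P + P * Aᵀ + α • P - (2 : ℝ) • (B * Bᵀ))) * P⁻¹).PosDef := by
    have := posDef_mul_mul_conjTranspose hLMI hPinvUnit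
    rwa [hPinvH] at this
  -- R is positive semidefinite
  have hRpsd : (P⁻¹ * B * Bᵀ * P⁻¹).PosSemidef := by
    have h1 : (B * Bᵀ).PosSemidef := by
      rw [← hBH]; exact posSemidef_self_mul_conjTranspose B
    have := h1.mul_mul_conjTranspose_same (P⁻¹)
    rw [hPinvH] at this
    simpa [Matrix.mul_assoc] using this
  -- Q in expanded form
  have hQeq : P⁻¹ * (-(A * P + P * Aᵀ + α • P - (2 : ℝ) • (B * Bᵀ))) * P⁻¹ =
      (-1 : ℝ) • (P⁻¹ * A + Aᵀ * P⁻¹) + (-α) • P⁻¹ + (2 : ℝ) • (P⁻¹ * B * Bᵀ * P⁻¹) := by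
    simp only [Matrix.mul_neg, Matrix.neg_mul, Matrix.mul_add, Matrix.add_mul,
      Matrix.mul_sub, Matrix.sub_mul, Matrix.mul_smul, Matrix.smul_mul, Matrix.mul_assoc]
    rw [hPP]
    simp only [Matrix.mul_one]
    rw [← Matrix.mul_assoc P⁻¹ P, hPiP]
    simp only [Matrix.one_mul]
    module
  -- eigenvalue bound
  have hev : ∀ i, 0 < hL1.1.eigenvalues i := fun i => hL1.eigenvalues_pos i
  have hbdd : BddBelow (Set.range hL1.1.eigenvalues) := (Set.finite_range _).bddBelow
  have hmle : ∀ i, (⨅ j, hL1.1.eigenvalues j) ≤ hL1.1.eigenvalues i :=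
    fun i => ciInf_le hbdd i
  have hmpos : 0 < ⨅ j, hL1.1.eigenvalues j := by
    obtain ⟨i0, hi0⟩ := Finite.exists_min hL1.1.eigenvalues
    exact lt_of_lt_of_le (hev i0) (le_ciInf hi0)
  have hcomb : ∀ i, 0 ≤ 2 * c1 * hL1.1.eigenvalues i ^ 2 - 2 * hL1.1.eigenvalues i := by
    intro i
    have h1 : 1 / hL1.1.eigenvalues i ≤ 1 / ⨅ j, hL1.1.eigenvalues j :=
      one_div_le_one_div_of_le hmpos (hmle i)
    have h2 : 1 / hL1.1.eigenvalues i ≤ c1 := le_trans h1 hc1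
    have h3 : 1 ≤ c1 * hL1.1.eigenvalues i := by
      rw [div_le_iff₀ (hev i)] at h2
      linarith [h2]
    nlinarith [hev i, h3]
  have hSpsd : ((2 * c1) • (L1 * L1) - (2 : ℝ) • L1).PosSemidef :=
    posSemidef_spectral_comb hL1.1 c1 hcomb
  -- restate hypothesis and goal in kronecker notation
  have hZ' : Z = L1 ⊗ₖ (P⁻¹ * A + Aᵀ * P⁻¹) -
      (2 * c1) • ((L1 * L1) ⊗ₖ (P⁻¹ * B * Bᵀ * P⁻¹)) := hZ
  show (-(Z + α • (L1 ⊗ₖ P⁻¹))).PosDef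
  -- the key algebraic identity
  have hkey : -(Z + α • (L1 ⊗ₖ P⁻¹)) =
      L1 ⊗ₖ (P⁻¹ * (-(A * P + P * Aᵀ + α • P - (2 : ℝ) • (B * Bᵀ))) * P⁻¹) +
        ((2 * c1) • (L1 * L1) - (2 : ℝ) • L1) ⊗ₖ (P⁻¹ * B * Bᵀ * P⁻¹) := by
    rw [hZ', hQeq,
      show (2 * c1) • (L1 * L1) - (2 : ℝ) • L1 = (2 * c1) • (L1 * L1) + (-2 : ℝ) • L1 by module]
    simp only [add_kronecker, kronecker_add, smul_kronecker, kronecker_smul]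
    module
  rw [hkey]
  exact (posDef_kron hL1 hQpos).add_posSemidef (posSemidef_kron hSpsd hRpsd)
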